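/- Suppose a > 0, d > 0, b ≥ 0, x(k+1) − x(k) ≥ x(k)·(b − a·x(k − τ(k))) + d for all integers k ≥ k₀, and there is a constant Ñ > 0 with limsup_{k→+∞} x(k) ≤ Ñ and 1 − a·Ñ > 0. Then liminf_{k→+∞} x(k) ≥ (b/a)·(1 − a·Ñ)^{τ̄}. (Discrete case, 𝕋 = ℤ, of Lemma 2.15(ii).) -/

import Mathlib

open Filter

/-- Discrete case (𝕋 = ℤ) of Lemma 2.15(ii): if
`x(k+1) − x(k) ≥ x(k)(b − a x(k − τ(k))) + d` for `k ≥ k₀`,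
`limsup_{k→∞} x(k) ≤ Ñ` and `1 − a Ñ > 0`, then
`liminf_{k→∞} x(k) ≥ (b/a)(1 − a Ñ)^{τ̄}`. -/
lemma aux_persist (a b d M : ℝ) (k₀ : ℤ) (τbar : ℕ) (τ : ℤ → ℕ) (x : ℤ → ℝ)
    (ha : 0 < a) (hd : 0 < d) (hb : 0 ≤ b)
    (hτ : ∀ k : ℤ, τ k ≤ τbar)
    (hxpos : ∀ k : ℤ, k₀ - (τbar : ℤ) ≤ k → 0 < x k)
    (hineq : ∀ k : ℤ, k₀ ≤ k →
      x (k + 1) - x k ≥ x k * (b - a * x (k - (τ k : ℤ))) + d)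
    (hM0 : 0 < M) (hM1 : a * M < 1)
    (K₁ : ℤ) (hK₁ : ∀ k : ℤ, K₁ ≤ k → x k ≤ M) :
    ∃ K₂ : ℤ, ∀ k : ℤ, K₂ ≤ k → b / a * (1 - a * M) ^ τbar ≤ x k := by
  set c1 : ℝ := 1 - a * M with hc1def
  have hc1 : 0 < c1 := by simp [hc1def]; linarith
  have hc1le : c1 ≤ 1 := by have : 0 < a * M := mul_pos ha hM0; simp [hc1def]; linarith
  set K : ℤ := max K₁ k₀ + 2 * (τbar : ℤ) with hKdef
  have hKK₁ : K₁ + 2 * (τbar : ℤ) ≤ K := by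
    have := le_max_left K₁ k₀; omega
  have hKk₀ : k₀ + 2 * (τbar : ℤ) ≤ K := by
    have := le_max_right K₁ k₀; omega
  -- single-step lower bound
  have step : ∀ k : ℤ, K - τbar ≤ k → c1 * x k + d ≤ x (k + 1) := by
    intro k hk
    have hτk : (τ k : ℤ) ≤ (τbar : ℤ) := by exact_mod_cast hτ k
    have hP : x (k - τ k) ≤ M := hK₁ _ (by omega)
    have hxk : 0 < x k := hxpos k (by omega)
    have hi := hineq k (by omega)
    have h1 : 0 ≤ x k * b := mul_nonneg hxk.le hb
    have h2 : 0 ≤ (a * x k) * (M - x (k - τ k)) :=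
      mul_nonneg (mul_nonneg ha.le hxk.le) (by linarith)
    simp only [hc1def]
    nlinarith [hi]
  -- chain lower bound over j steps
  have chain : ∀ j : ℕ, ∀ k : ℤ, K - τbar + j ≤ k → c1 ^ j * x (k - j) ≤ x k := by
    intro j
    induction j with
    | zero => intro k hk; simp
    | succ j ih =>
      intro k hk
      have h1 : c1 ^ j * x (k - 1 - j) ≤ x (k - 1) := ih (k - 1) (by push_cast at hk ⊢; omega)
      have h2 : c1 * x (k - 1) + d ≤ x (k - 1 + 1) := step (k - 1) (by push_cast at hk ⊢; omega)
      rw [sub_add_cancel] at h2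
      have hidx : k - ((j : ℤ) + 1) = k - 1 - j := by ring
      push_cast [pow_succ, hidx]
      nlinarith [mul_le_mul_of_nonneg_left h1 hc1.le]
  have chainτ : ∀ k : ℤ, K ≤ k → c1 ^ τbar * x (k - τ k) ≤ x k := by
    intro k hk
    have hτk : (τ k : ℤ) ≤ (τbar : ℤ) := by exact_mod_cast hτ k
    have h1 : c1 ^ (τ k) * x (k - τ k) ≤ x k := chain (τ k) k (by omega)
    have hP : 0 < x (k - τ k) := hxpos _ (by omega)
    have h2 : c1 ^ τbar ≤ c1 ^ (τ k) := pow_le_pow_of_le_one hc1.le hc1le (hτ k)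
    nlinarith
  -- descent landing bound
  have descent : ∀ k : ℤ, K ≤ k → x (k + 1) < x k → b / a * c1 ^ τbar + d ≤ x (k + 1) := by
    intro k hk hlt
    have hτk : (τ k : ℤ) ≤ (τbar : ℤ) := by exact_mod_cast hτ k
    set P : ℝ := x (k - τ k) with hPdef
    have hP0 : 0 < P := hxpos _ (by omega)
    have hPM : P ≤ M := hK₁ _ (by omega)
    have hxk : 0 < x k := hxpos k (by omega)
    have hch : c1 ^ τbar * P ≤ x k := chainτ k hk
    have hi := hineq k (by omega)
    have hbP : b < a * P := by
      by_contra h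
      push_neg at h
      nlinarith [mul_nonneg hxk.le (sub_nonneg.2 h)]
    have haP1 : a * P < 1 := by nlinarith
    have h1b : (0:ℝ) ≤ 1 + b - a * P := by linarith
    have hquad : b / a ≤ P * (1 + b - a * P) := by
      rw [div_le_iff₀ ha]
      nlinarith [mul_nonneg (sub_nonneg.2 hbP.le) (sub_nonneg.2 haP1.le)]
    have hpow : (0:ℝ) ≤ c1 ^ τbar := pow_nonneg hc1.le _
    have e1 : x k * (1 + b - a * P) + d ≤ x (k + 1) := by nlinarith [hi]
    have e2 : (c1 ^ τbar * P) * (1 + b - a * P) ≤ x k * (1 + b - a * P) :=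
      mul_le_mul_of_nonneg_right hch h1b
    have e3 : c1 ^ τbar * (b / a) ≤ c1 ^ τbar * (P * (1 + b - a * P)) :=
      mul_le_mul_of_nonneg_left hquad hpow
    calc b / a * c1 ^ τbar + d = c1 ^ τbar * (b / a) + d := by ring
      _ ≤ c1 ^ τbar * (P * (1 + b - a * P)) + d := by linarith
      _ = (c1 ^ τbar * P) * (1 + b - a * P) + d := by ring
      _ ≤ x k * (1 + b - a * P) + d := by linarith
      _ ≤ x (k + 1) := e1
  by_cases hdes : ∃ k' : ℤ, K ≤ k' ∧ x (k' + 1) < x k'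
  · obtain ⟨k', hk', hlt⟩ := hdes
    refine ⟨k' + 1, ?_⟩
    have main : ∀ k : ℤ, k' + 1 ≤ k → b / a * c1 ^ τbar + d ≤ x k := by
      refine Int.le_induction (descent k' hk' hlt) ?_
      intro k hk ih
      by_cases h : x (k + 1) < x k
      · exact descent k (by omega) h
      · push_neg at h; linarith
    intro k hk
    have := main k hk
    linarith
  · push_neg at hdes
    -- monotone from K on
    have mono : ∀ k₁ k₂ : ℤ, K ≤ k₁ → k₁ ≤ k₂ → x k₁ ≤ x k₂ := by
      intro k₁ k₂ hK1 h12
      refine Int.le_induction (motive := fun m _ => x k₁ ≤ x m) (le_refl (x k₁)) ?_ k₂ h12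
      intro k hk ih
      exact ih.trans (hdes k (by omega))
    have hba : 0 ≤ b / a := div_nonneg hb ha.le
    have hLle : b / a * c1 ^ τbar ≤ b / a := by
      nlinarith [pow_le_one₀ (n := τbar) hc1.le hc1le]
    -- there must be some k₂ ≥ K with x k₂ ≥ L
    have hex : ∃ k₂ : ℤ, K ≤ k₂ ∧ b / a * c1 ^ τbar ≤ x k₂ := by
      by_contra hall
      push_neg at hall
      have growth : ∀ k : ℤ, K + (τbar:ℤ) ≤ k → x k + d ≤ x (k + 1) := by
        intro k hk
        have hτk : (τ k : ℤ) ≤ (τbar : ℤ) := by exact_mod_cast hτ k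
        have hmono : x (k - τ k) ≤ x k := mono _ _ (by omega) (by omega)
        have hsmall : x k < b / a * c1 ^ τbar := hall k (by omega)
        have hxk : 0 < x k := hxpos k (by omega)
        have hPb : a * x (k - τ k) < b := by
          have : x (k - τ k) < b / a := by linarith
          calc a * x (k - τ k) < a * (b / a) := by nlinarith
            _ = b := by field_simp
        have hi := hineq k (by omega)
        nlinarith [mul_nonneg hxk.le (sub_nonneg.2 hPb.le)]
      have iter : ∀ n : ℕ, x (K + τbar) + n * d ≤ x (K + τbar + n) := by
        intro n
        induction n with
        | zero => simp
        | succ n ih =>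
          have := growth (K + τbar + n) (by omega)
          have hidx : K + (τbar:ℤ) + ((n:ℤ) + 1) = (K + τbar + n) + 1 := by ring
          push_cast [hidx]
          push_cast at ih
          linarith
      obtain ⟨n, hn⟩ := exists_nat_gt (M / d)
      have hnd : M < n * d := by
        rw [div_lt_iff₀ hd] at hn; linarith
      have h0 : 0 < x (K + τbar) := hxpos _ (by omega)
      have hub : x (K + τbar + n) ≤ M := hK₁ _ (by omega)
      have := iter n
      linarith
    obtain ⟨k₂, hk₂, hL⟩ := hex
    exact ⟨k₂, fun k hk => hL.trans (mono k₂ k hk₂ hk)⟩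

theorem liminf_ge_of_delay_ineq_explicit_discrete
    (a b d N : ℝ) (k₀ : ℤ) (τbar : ℕ) (τ : ℤ → ℕ) (x : ℤ → ℝ)
    (ha : 0 < a) (hd : 0 < d) (hb : 0 ≤ b)
    (hτ : ∀ k : ℤ, τ k ≤ τbar)
    (hxpos : ∀ k : ℤ, k₀ - (τbar : ℤ) ≤ k → 0 < x k)
    (hineq : ∀ k : ℤ, k₀ ≤ k →
      x (k + 1) - x k ≥ x k * (b - a * x (k - (τ k : ℤ))) + d)
    (hN : 0 < N) (hreg : 0 < 1 - a * N)
    (hbound : Filter.limsup (fun k : ℤ => ((x k : EReal))) Filter.atTop ≤ ((N : ℝ) : EReal)) :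
    ((b / a * (1 - a * N) ^ τbar : ℝ) : EReal) ≤
      Filter.liminf (fun k : ℤ => ((x k : EReal))) Filter.atTop := by
  have key : ∀ ε : ℝ, 0 < ε → a * (N + ε) < 1 →
      ((b / a * (1 - a * (N + ε)) ^ τbar : ℝ) : EReal) ≤
        Filter.liminf (fun k : ℤ => ((x k : EReal))) Filter.atTop := by
    intro ε hε hM1
    have hlt : Filter.limsup (fun k : ℤ => ((x k : EReal))) Filter.atTop < ((N + ε : ℝ) : EReal) :=
      lt_of_le_of_lt hbound (by exact_mod_cast (by linarith : N < N + ε))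
    have hev : ∀ᶠ k in (atTop : Filter ℤ), (x k : EReal) < ((N + ε : ℝ) : EReal) :=
      Filter.eventually_lt_of_limsup_lt hlt
    have hev' : ∀ᶠ k in (atTop : Filter ℤ), x k ≤ N + ε := by
      filter_upwards [hev] with k hk
      exact (EReal.coe_lt_coe_iff.1 hk).le
    obtain ⟨K₁, hK₁⟩ := eventually_atTop.1 hev'
    obtain ⟨K₂, hK₂⟩ := aux_persist a b d (N + ε) k₀ τbar τ x ha hd hb hτ hxpos hineq
      (by linarith) hM1 K₁ hK₁
    have hev2 : ∀ᶠ k in (atTop : Filter ℤ),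
        ((b / a * (1 - a * (N + ε)) ^ τbar : ℝ) : EReal) ≤ (x k : EReal) :=
      eventually_atTop.2 ⟨K₂, fun k hk => EReal.coe_le_coe_iff.2 (hK₂ k hk)⟩
    calc ((b / a * (1 - a * (N + ε)) ^ τbar : ℝ) : EReal)
        = Filter.liminf (fun _ : ℤ => ((b / a * (1 - a * (N + ε)) ^ τbar : ℝ) : EReal)) atTop :=
          (Filter.liminf_const _).symm
      _ ≤ Filter.liminf (fun k : ℤ => ((x k : EReal))) Filter.atTop :=
          Filter.liminf_le_liminf hev2
  -- take ε → 0⁺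
  have hcontR : Continuous fun ε : ℝ => b / a * (1 - a * (N + ε)) ^ τbar := by
    continuity
  have htend : Filter.Tendsto (fun ε : ℝ => ((b / a * (1 - a * (N + ε)) ^ τbar : ℝ) : EReal))
      (nhdsWithin 0 (Set.Ioi 0)) (nhds ((b / a * (1 - a * N) ^ τbar : ℝ) : EReal)) := by
    apply EReal.tendsto_coe.2
    have := hcontR.tendsto 0
    simpa using this.mono_left nhdsWithin_le_nhds
  have hevε : ∀ᶠ ε in nhdsWithin (0:ℝ) (Set.Ioi 0),
      ((b / a * (1 - a * (N + ε)) ^ τbar : ℝ) : EReal) ≤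
        Filter.liminf (fun k : ℤ => ((x k : EReal))) Filter.atTop := by
    have h1 : ∀ᶠ ε in nhdsWithin (0:ℝ) (Set.Ioi 0), ε < (1 - a * N) / a := by
      apply eventually_nhdsWithin_of_eventually_nhds
      exact gt_mem_nhds (by positivity)
    have h2 : ∀ᶠ ε in nhdsWithin (0:ℝ) (Set.Ioi 0), (0:ℝ) < ε :=
      eventually_mem_nhdsWithin
    filter_upwards [h1, h2] with ε hε1 hε2
    apply key ε hε2
    have : a * ε < a * ((1 - a * N) / a) := by exact mul_lt_mul_of_pos_left hε1 ha
    rw [mul_div_cancel₀ _ ha.ne'] at this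
    nlinarith
  exact le_of_tendsto htend hevε
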